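/- The AND-OR protocol for G_n has cost at most ⌈√n⌉: if [n] is partitioned into ⌈√n⌉ blocks of size at most ⌈√n⌉ and Alice writes 1 at an arriving location iff it is the last of its block to arrive (with the final bit b written at the last location), then in the completed array either there is an all-zero block (which then contains σ_n) or the set of locations holding 1 has size ⌈√n⌉ and contains σ_n. -/
import Mathlib


/-- the AND-OR protocol has cost at most `⌈√n⌉`.  Given a partition of the
locations into `k = ⌈√n⌉` blocks (`P ℓ` is the block of `ℓ`) each of size at most `k`, on
stream `σ` Alice writes `1` at a location iff it is the last of its block to arrive (and
writes the given bit `b` at the last location `σ (n-1)`).  In the completed array, either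
some block is all-zero and contains the last location, or the set of locations holding `1`
has size at most `k` and contains the last location. -/
theorem and_or_protocol_cost (n : ℕ) (hn : 1 ≤ n) (k : ℕ) (hk : k = ⌈Real.sqrt n⌉₊)
    (P : Fin n → Fin k) (hP : ∀ j : Fin k, (Finset.univ.filter fun ℓ => P ℓ = j).card ≤ k)
    (σ : Equiv.Perm (Fin n)) (b : Bool) :
    ∀ (last : Fin n), last = σ ⟨n - 1, by omega⟩ →
    ∀ (v : Fin n → Bool), (v = fun ℓ => if ℓ = last then b
        else decide (∀ m : Fin n, P m = P ℓ → σ.symm m ≤ σ.symm ℓ)) →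
      ((∃ j : Fin k, P last = j ∧ ∀ ℓ : Fin n, P ℓ = j → v ℓ = false) ∨
        ((Finset.univ.filter fun ℓ : Fin n => v ℓ = true).card ≤ k ∧ v last = true)) := by
  intro last hlast v hv
  have hsl : σ.symm last = ⟨n - 1, by omega⟩ := by rw [hlast]; simp
  have hmax : ∀ m : Fin n, σ.symm m ≤ σ.symm last := by
    intro m
    rw [hsl, Fin.le_def]
    have := (σ.symm m).isLt
    simp only []
    omega
  cases b with
  | false =>
    left
    refine ⟨P last, rfl, ?_⟩
    intro ℓ hℓ
    subst hv
    by_cases h : ℓ = last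
    · simp [h]
    · simp only [if_neg h, decide_eq_false_iff_not]
      intro hall
      exact h (σ.symm.injective (le_antisymm (hmax ℓ) (hall last hℓ.symm)))
  | true =>
    right
    have hvt : ∀ ℓ, v ℓ = true → ∀ m : Fin n, P m = P ℓ → σ.symm m ≤ σ.symm ℓ := by
      intro ℓ hℓ
      subst hv
      by_cases h : ℓ = last
      · subst h; intro m _; exact hmax m
      · simp only [if_neg h] at hℓ; exact of_decide_eq_true hℓ
    constructor
    · have hinj : Set.InjOn P (Finset.univ.filter fun ℓ : Fin n => v ℓ = true) := by
        intro x hx y hy hxy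
        simp only [Finset.coe_filter, Set.mem_setOf_eq] at hx hy
        exact σ.symm.injective (le_antisymm (hvt y hy.2 x hxy) (hvt x hx.2 y hxy.symm))
      have := Finset.card_le_card_of_injOn P (fun _ _ => Finset.mem_univ _) hinj
      simpa using this
    · subst hv; simp
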